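/- With Aᵢ defined recursively by A₁ = [[0,-1],[1,0]], A_{i+1} = [[A₁, Bᵢ],[−Bᵢᵀ, Aᵢ]] (where Bᵢ is the concatenation of i copies of [[1,-1],[-1,1]]), every column of Aᵢ has Hamming weight exactly 2i−1, i.e. exactly one entry of each column is zero, provided F has characteristic 0 (or more generally the nonzero entries ±1 remain nonzero). -/
import Mathlib


open scoped Classical in
noncomputable def wt {F : Type*} [Field F] {m : ℕ} (v : Fin m → F) : ℕ :=
  (Finset.univ.filter fun p => v p ≠ 0).card

def A1 (F : Type*) [Field F] : Matrix (Fin 2) (Fin 2) F := !![0, -1; 1, 0]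
def B1 (F : Type*) [Field F] : Matrix (Fin 2) (Fin 2) F := !![1, -1; -1, 1]

/-- `Bmat F i` is the horizontal concatenation of `i` copies of `B1`. -/
def Bmat (F : Type*) [Field F] (i : ℕ) : Matrix (Fin 2) (Fin (2 * i)) F :=
  fun a b => B1 F a ⟨b.val % 2, Nat.mod_lt _ (by norm_num)⟩

def Amat (F : Type*) [Field F] : (i : ℕ) → Matrix (Fin (2 * i)) (Fin (2 * i)) F
  | 0 => 0
  | 1 => Matrix.reindex (finCongr (by norm_num)) (finCongr (by norm_num)) (A1 F)
  | (i + 2) =>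
      Matrix.reindex (finSumFinEquiv.trans (finCongr (by omega)))
        (finSumFinEquiv.trans (finCongr (by omega)))
        (Matrix.fromBlocks (A1 F) (Bmat F (i + 1)) (-(Bmat F (i + 1)).transpose) (Amat F (i + 1)))

open scoped Classical in
noncomputable def cnt {F : Type*} [Field F] {α : Type*} [Fintype α] (v : α → F) : ℕ :=
  (Finset.univ.filter fun p => v p ≠ 0).card

open scoped Classical in
lemma wt_eq_cnt {F : Type*} [Field F] {m : ℕ} (v : Fin m → F) : wt v = cnt v := by
  simp [wt, cnt]

open scoped Classical in
lemma cnt_eq_card {F : Type*} [Field F] {α : Type*} [Fintype α] (v : α → F) :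
    cnt v = Fintype.card {a // v a ≠ 0} := by
  simp [cnt, Fintype.card_subtype]

lemma cnt_comp_equiv {F : Type*} [Field F] {α β : Type*} [Fintype α] [Fintype β]
    (e : α ≃ β) (v : β → F) : cnt (fun a => v (e a)) = cnt v := by
  classical
  rw [cnt_eq_card, cnt_eq_card]
  exact Fintype.card_congr (e.subtypeEquiv (fun a => Iff.rfl))

lemma cnt_sum {F : Type*} [Field F] {α β : Type*} [Fintype α] [Fintype β]
    (v : α ⊕ β → F) :
    cnt v = cnt (fun a => v (Sum.inl a)) + cnt (fun b => v (Sum.inr b)) := by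
  classical
  rw [cnt_eq_card, cnt_eq_card, cnt_eq_card, ← Fintype.card_sum]
  exact Fintype.card_congr Equiv.subtypeSum

lemma cnt_all_ne {F : Type*} [Field F] {α : Type*} [Fintype α] (v : α → F)
    (h : ∀ a, v a ≠ 0) : cnt v = Fintype.card α := by
  classical
  simp [cnt, Finset.filter_eq_self.2 (fun a _ => h a)]

lemma B1_ne_zero {F : Type*} [Field F] (a b : Fin 2) : B1 F a b ≠ 0 := by
  fin_cases a <;> fin_cases b <;> simp [B1]

lemma A1_col_cnt {F : Type*} [Field F] (j : Fin 2) :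
    cnt (fun r => A1 F r j) = 1 := by
  classical
  unfold cnt
  rw [Finset.card_eq_one]
  fin_cases j
  · exact ⟨1, by ext p; fin_cases p <;> simp [A1]⟩
  · exact ⟨0, by ext p; fin_cases p <;> simp [A1]⟩

theorem Amat_col_weight (F : Type*) [Field F] (i : ℕ) (hi : 1 ≤ i) (j : Fin (2 * i)) :
    wt (fun r => Amat F i r j) = 2 * i - 1 := by
  classical
  induction i with
  | zero => omega
  | succ k ih =>
    rcases Nat.eq_zero_or_pos k with hk | hk
    · subst hk
      rw [wt_eq_cnt]
      show cnt (fun r => Amat F 1 r j) = 1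
      have : (fun r : Fin (2*1) => Amat F 1 r j)
          = (fun r : Fin (2*1) => A1 F (finCongr (by norm_num : 2*1 = 2) r)
              ((finCongr (by norm_num : 2*1 = 2)) j)) := by
        funext r
        simp [Amat, Matrix.reindex_apply, finCongr]
      rw [this]
      exact (cnt_comp_equiv (finCongr (by norm_num))
        (fun r => A1 F r ((finCongr (by norm_num : 2*1 = 2)) j))).trans (A1_col_cnt _)
    · obtain ⟨m, rfl⟩ : ∃ m, k = m + 1 := ⟨k - 1, by omega⟩
      rw [wt_eq_cnt]
      set e : Fin 2 ⊕ Fin (2 * (m+1)) ≃ Fin (2 * (m+2)) :=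
        finSumFinEquiv.trans (finCongr (by omega)) with he
      have hA : (fun r : Fin (2*(m+2)) => Amat F (m+2) r j)
          = (fun r : Fin (2*(m+2)) =>
              (Matrix.fromBlocks (A1 F) (Bmat F (m + 1)) (-(Bmat F (m + 1)).transpose)
                (Amat F (m + 1))) (e.symm r) (e.symm j)) := by
        funext r
        show Amat F (m+2) r j = _
        simp [Amat, Matrix.reindex_apply, he]
      rw [hA]
      have := cnt_comp_equiv (F := F) e.symm
        (fun s => (Matrix.fromBlocks (A1 F) (Bmat F (m + 1)) (-(Bmat F (m + 1)).transpose)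
                (Amat F (m + 1))) s (e.symm j))
      rw [show (fun r : Fin (2*(m+2)) =>
              (Matrix.fromBlocks (A1 F) (Bmat F (m + 1)) (-(Bmat F (m + 1)).transpose)
                (Amat F (m + 1))) (e.symm r) (e.symm j))
          = (fun r => (fun s => (Matrix.fromBlocks (A1 F) (Bmat F (m + 1))
                (-(Bmat F (m + 1)).transpose) (Amat F (m + 1))) s (e.symm j)) (e.symm r)) from rfl,
        this]
      rw [cnt_sum]
      rcases hj : e.symm j with a | b
      · -- column in left blocks
        have h1 : cnt (fun r : Fin 2 =>
            (Matrix.fromBlocks (A1 F) (Bmat F (m + 1)) (-(Bmat F (m + 1)).transpose)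
              (Amat F (m + 1))) (Sum.inl r) (Sum.inl a)) = 1 := by
          simpa [Matrix.fromBlocks] using A1_col_cnt (F := F) a
        have h2 : cnt (fun r : Fin (2*(m+1)) =>
            (Matrix.fromBlocks (A1 F) (Bmat F (m + 1)) (-(Bmat F (m + 1)).transpose)
              (Amat F (m + 1))) (Sum.inr r) (Sum.inl a)) = 2*(m+1) := by
          rw [cnt_all_ne]
          · simp
          · intro r
            simp only [Matrix.fromBlocks, Matrix.of_apply, Sum.elim_inr, Sum.elim_inl,
              Matrix.neg_apply, Matrix.transpose_apply, neg_ne_zero, Bmat]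
            exact B1_ne_zero _ _
        rw [h1, h2]; omega
      · -- column in right blocks
        have h1 : cnt (fun r : Fin 2 =>
            (Matrix.fromBlocks (A1 F) (Bmat F (m + 1)) (-(Bmat F (m + 1)).transpose)
              (Amat F (m + 1))) (Sum.inl r) (Sum.inr b)) = 2 := by
          rw [cnt_all_ne]
          · simp
          · intro r
            simp only [Matrix.fromBlocks, Matrix.of_apply, Sum.elim_inl, Sum.elim_inr, Bmat]
            exact B1_ne_zero _ _
        have h2 : cnt (fun r : Fin (2*(m+1)) =>
            (Matrix.fromBlocks (A1 F) (Bmat F (m + 1)) (-(Bmat F (m + 1)).transpose)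
              (Amat F (m + 1))) (Sum.inr r) (Sum.inr b)) = 2*(m+1) - 1 := by
          have := ih (by omega) b
          rw [wt_eq_cnt] at this
          simpa [Matrix.fromBlocks] using this
        rw [h1, h2]; omega
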